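/- For an acceptance set A and traded asset S, the risk measure ρ_{A,S} is lower semicontinuous at a point x if and only if x + (m/S_0) S_T ∉ Closure(A) for every real m < ρ_{A,S}(x), which is also equivalent to ρ_{Closure(A),S}(x) = ρ_{A,S}(x). -/

import Mathlib

open BoundedContinuousFunction MeasureTheory Pointwise

variable {Ω : Type*} [TopologicalSpace Ω] [DiscreteTopology Ω] [Nonempty Ω]

/-- `X` is modeled as the Banach lattice `Ω →ᵇ ℝ` of bounded functions with sup norm
(the discrete topology makes every function continuous) and pointwise order.
An acceptance set is a nonempty proper monotone subset of `X`. -/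
def IsAcceptanceSet (A : Set (Ω →ᵇ ℝ)) : Prop :=
  A.Nonempty ∧ A ≠ Set.univ ∧ ∀ x ∈ A, ∀ y, x ≤ y → y ∈ A

/-- the risk measure `ρ_{A,S}` w.r.t. the acceptance set `A` and the traded asset
`S = (S0, ST)`, with values in the extended reals -/
noncomputable def riskMeasure (A : Set (Ω →ᵇ ℝ)) (S0 : ℝ) (ST : Ω →ᵇ ℝ) (x : Ω →ᵇ ℝ) : EReal :=
  sInf ((fun m : ℝ => (m : EReal)) '' {m : ℝ | x + (m / S0) • ST ∈ A})

omit [DiscreteTopology Ω] [Nonempty Ω] in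
private lemma smul_mono_bcf {a b : ℝ} (h : a ≤ b) (ST : Ω →ᵇ ℝ) (hST : 0 ≤ ST) :
    a • ST ≤ b • ST := by
  intro ω
  show (a • ST) ω ≤ (b • ST) ω
  have h0 : (0:ℝ) ≤ ST ω := by have := hST ω; simpa using this
  simp only [coe_smul, Pi.smul_apply, smul_eq_mul]
  nlinarith

omit [Nonempty Ω] in
private lemma closure_monotone {A : Set (Ω →ᵇ ℝ)}
    (hm : ∀ x ∈ A, ∀ y, x ≤ y → y ∈ A) :
    ∀ a ∈ closure A, ∀ y, a ≤ y → y ∈ closure A := by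
  intro a ha y hy
  have hEq : a + (y - a) = y := by abel
  have := map_mem_closure (f := fun t => t + (y - a)) (continuous_add_right _) ha
    (fun t ht => hm t ht _ (le_add_of_nonneg_right (sub_nonneg.mpr hy)))
  have h2 : a + (y - a) ∈ closure A := this
  rwa [hEq] at h2

theorem riskMeasure_lowerSemicontinuousAt_iff
    (A : Set (Ω →ᵇ ℝ)) (hA : IsAcceptanceSet A) (S0 : ℝ) (hS0 : 0 < S0) (ST : Ω →ᵇ ℝ) (hST : 0 ≤ ST) (hST0 : ST ≠ 0) (x : Ω →ᵇ ℝ) :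
    (LowerSemicontinuousAt (riskMeasure A S0 ST) x ↔
      ∀ m : ℝ, (m : EReal) < riskMeasure A S0 ST x → x + (m / S0) • ST ∉ closure A) ∧
    (LowerSemicontinuousAt (riskMeasure A S0 ST) x ↔
      riskMeasure (closure A) S0 ST x = riskMeasure A S0 ST x) := by
  obtain ⟨-, -, hmono⟩ := hA
  -- upward closedness in the cash direction
  have upward : ∀ z : Ω →ᵇ ℝ, ∀ m m' : ℝ, m ≤ m' → z + (m / S0) • ST ∈ A →
      z + (m' / S0) • ST ∈ A := by
    intro z m m' h hz
    refine hmono _ hz _ (add_le_add (le_refl z) ?_)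
    exact smul_mono_bcf (by gcongr) ST hST
  have key_le : ∀ z : Ω →ᵇ ℝ, ∀ m : ℝ, z + (m / S0) • ST ∈ A →
      riskMeasure A S0 ST z ≤ (m : EReal) := fun z m h => sInf_le ⟨m, h, rfl⟩
  have key_ge : ∀ z : Ω →ᵇ ℝ, ∀ m : ℝ, z + (m / S0) • ST ∉ A →
      (m : EReal) ≤ riskMeasure A S0 ST z := by
    intro z m hz
    refine le_sInf ?_
    rintro e ⟨m'', hm'', rfl⟩
    rw [EReal.coe_le_coe_iff]
    by_contra h
    push_neg at h
    exact hz (upward z m'' m h.le hm'')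
  -- LSC → (1)
  have h1 : LowerSemicontinuousAt (riskMeasure A S0 ST) x →
      ∀ m : ℝ, (m : EReal) < riskMeasure A S0 ST x → x + (m / S0) • ST ∉ closure A := by
    intro hlsc m hm hcl
    obtain ⟨m', hmm', hm'ρ⟩ := EReal.exists_between_coe_real hm
    have hev := hlsc _ hm'ρ
    rw [Metric.eventually_nhds_iff] at hev
    obtain ⟨ε, hε, hball⟩ := hev
    rw [Metric.mem_closure_iff] at hcl
    obtain ⟨a, haA, hdist⟩ := hcl ε hε
    set z := a - (m / S0) • ST with hzdef
    have hzx : dist z x < ε := by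
      rw [dist_eq_norm]
      have : z - x = a - (x + (m / S0) • ST) := by rw [hzdef]; abel
      rw [this, ← dist_eq_norm, dist_comm]
      exact hdist
    have hlt := hball hzx
    have hle : riskMeasure A S0 ST z ≤ (m : EReal) := by
      refine key_le z m ?_
      have : z + (m / S0) • ST = a := by rw [hzdef]; abel
      rwa [this]
    exact lt_asymm hmm' ((hlt.trans_le hle))
  -- (1) → LSC
  have h2 : (∀ m : ℝ, (m : EReal) < riskMeasure A S0 ST x → x + (m / S0) • ST ∉ closure A) →
      LowerSemicontinuousAt (riskMeasure A S0 ST) x := by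
    intro hP c hc
    obtain ⟨m, hcm, hmρ⟩ := EReal.exists_between_coe_real hc
    have hncl := hP m hmρ
    rw [Metric.mem_closure_iff] at hncl
    push_neg at hncl
    obtain ⟨ε, hε, hsep⟩ := hncl
    rw [Metric.eventually_nhds_iff]
    refine ⟨ε, hε, fun z hz => ?_⟩
    refine lt_of_lt_of_le hcm (key_ge z m ?_)
    intro hmem
    have := hsep _ hmem
    rw [dist_comm, dist_add_right] at this
    exact absurd hz (not_lt.mpr this)
  -- (1) ↔ (2)
  have hsub : riskMeasure (closure A) S0 ST x ≤ riskMeasure A S0 ST x :=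
    sInf_le_sInf (Set.image_mono (fun m hm => subset_closure hm))
  have pq : (∀ m : ℝ, (m : EReal) < riskMeasure A S0 ST x → x + (m / S0) • ST ∉ closure A) →
      riskMeasure (closure A) S0 ST x = riskMeasure A S0 ST x := by
    intro hP
    refine le_antisymm hsub (le_sInf ?_)
    rintro e ⟨m, hm, rfl⟩
    by_contra h
    push_neg at h
    exact hP m h hm
  have qp : riskMeasure (closure A) S0 ST x = riskMeasure A S0 ST x →
      ∀ m : ℝ, (m : EReal) < riskMeasure A S0 ST x → x + (m / S0) • ST ∉ closure A := by
    intro hQ m hm hcl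
    rw [← hQ] at hm
    have hle : riskMeasure (closure A) S0 ST x ≤ (m : EReal) := sInf_le ⟨m, hcl, rfl⟩
    exact absurd hle (not_le.mpr hm)
  exact ⟨⟨h1, h2⟩, ⟨fun L => pq (h1 L), fun q => h2 (qp q)⟩⟩
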